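/- The Gagliardo–Nirenberg inequality in one dimension: there is a constant C such that for all f ∈ H¹(ℝ), ‖f‖_{L⁴(ℝ)}⁴ ≤ C ‖f‖_{L²(ℝ)}³ ‖f'‖_{L²(ℝ)}. -/

import Mathlib

open MeasureTheory ENNReal Set Filter Topology

/-- the Gagliardo–Nirenberg inequality in one dimension: there is a
constant C such that for all f ∈ H¹(ℝ) (f ∈ L² differentiable with derivative in L²),
‖f‖_{L⁴}⁴ ≤ C ‖f‖_{L²}³ ‖f'‖_{L²}. -/
theorem stmt_3 :
    ∃ C : ℝ, 0 < C ∧ ∀ f : ℝ → ℂ, Differentiable ℝ f →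
      MemLp f 2 (volume : Measure ℝ) → MemLp (deriv f) 2 (volume : Measure ℝ) →
      (eLpNorm f 4 volume) ^ (4 : ℕ) ≤
        ENNReal.ofReal C * (eLpNorm f 2 volume) ^ (3 : ℕ) * eLpNorm (deriv f) 2 volume := by
  refine ⟨2, two_pos, ?_⟩
  intro f hdiff hf2 hf'2
  -- notation
  set g : ℝ → ℝ := fun t => ‖f t‖ ^ 2 with hg_def
  set φ : ℝ → ℝ := fun t => 2 * (inner ℝ (f t) (deriv f t) : ℝ) with hφ_def
  have hder : ∀ t : ℝ, HasDerivAt g (φ t) t := fun t => (hdiff t).hasDerivAt.norm_sq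
  -- integrability of ‖f‖ * ‖f'‖
  have hK_int : Integrable (fun a => ‖f a‖ * ‖deriv f a‖) volume := by
    have h := MemLp.smul (μ := volume) hf'2.norm hf2.norm
      (p := 2) (q := 2) (r := 1)
    rw [← memLp_one_iff_integrable]
    exact h
  set K : ℝ := ∫ a, ‖f a‖ * ‖deriv f a‖ with hK_def
  have hK_nonneg : 0 ≤ K :=
    integral_nonneg fun a => mul_nonneg (norm_nonneg _) (norm_nonneg _)
  -- integrability of φ
  have hφ_meas : AEStronglyMeasurable φ volume := by
    have : Measurable fun t => (inner ℝ (f t) (deriv f t) : ℝ) :=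
      (hdiff.continuous.measurable).inner (measurable_deriv f)
    exact ((this.const_mul 2).aestronglyMeasurable)
  have hφ_bound : ∀ t, ‖φ t‖ ≤ 2 * (‖f t‖ * ‖deriv f t‖) := by
    intro t
    rw [hφ_def]
    simp only [norm_mul, Real.norm_ofNat, Real.norm_eq_abs]
    gcongr
    exact abs_real_inner_le_norm _ _
  have hφ_int : Integrable φ volume :=
    Integrable.mono' (hK_int.const_mul 2) hφ_meas (Eventually.of_forall hφ_bound)
  -- integrability of g
  have hg_int : Integrable g volume := by
    have h := hf2.integrable_norm_rpow two_ne_zero ENNReal.ofNat_ne_top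
    refine h.congr (Eventually.of_forall fun t => ?_)
    show ‖f t‖ ^ ((2:ℝ≥0∞)).toReal = ‖f t‖ ^ 2
    rw [show ((2:ℝ≥0∞)).toReal = ((2:ℕ):ℝ) by norm_num, Real.rpow_natCast]
  -- g tends to 0 at -∞
  have htend : Tendsto g atBot (𝓝 0) :=
    tendsto_zero_of_hasDerivAt_of_integrableOn_Iic (a := 0)
      (fun t _ => hder t) hφ_int.integrableOn hg_int.integrableOn
  -- pointwise bound : g x ≤ 2 K
  have hpt : ∀ x : ℝ, g x ≤ 2 * K := by
    intro x
    have hFTC : ∫ t in Iic x, φ t = g x - 0 :=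
      integral_Iic_of_hasDerivAt_of_tendsto' (fun t _ => hder t)
        hφ_int.integrableOn htend
    rw [sub_zero] at hFTC
    calc g x = ∫ t in Iic x, φ t := hFTC.symm
      _ ≤ ∫ t in Iic x, 2 * (‖f t‖ * ‖deriv f t‖) := by
          refine integral_mono hφ_int.integrableOn (hK_int.const_mul 2).integrableOn ?_
          intro t
          exact (le_abs_self _).trans (hφ_bound t)
      _ ≤ ∫ t, 2 * (‖f t‖ * ‖deriv f t‖) := by
          refine setIntegral_le_integral (hK_int.const_mul 2) ?_
          exact Eventually.of_forall fun t => by positivity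
      _ = 2 * K := by rw [hK_def, integral_const_mul]
  -- Cauchy–Schwarz : K ≤ (∫‖f‖²)^(1/2) * (∫‖f'‖²)^(1/2)
  have hCS : K ≤ (∫ a, ‖f a‖ ^ (2:ℝ)) ^ (1/(2:ℝ)) *
      (∫ a, ‖deriv f a‖ ^ (2:ℝ)) ^ (1/(2:ℝ)) := by
    refine integral_mul_norm_le_Lp_mul_Lq (E := ℂ) ?_ ?_ ?_
    · constructor <;> norm_num
    · rw [(by norm_num : ENNReal.ofReal 2 = 2)]; exact hf2
    · rw [(by norm_num : ENNReal.ofReal 2 = 2)]; exact hf'2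
  set SA : ℝ := (∫ a, ‖f a‖ ^ (2:ℝ)) ^ (1/(2:ℝ)) with hSA_def
  set SB : ℝ := (∫ a, ‖deriv f a‖ ^ (2:ℝ)) ^ (1/(2:ℝ)) with hSB_def
  have hSA_nonneg : 0 ≤ SA := Real.rpow_nonneg
    (integral_nonneg fun a => Real.rpow_nonneg (norm_nonneg _) _) _
  have hSB_nonneg : 0 ≤ SB := Real.rpow_nonneg
    (integral_nonneg fun a => Real.rpow_nonneg (norm_nonneg _) _) _
  -- eLpNorms in terms of SA, SB
  have eqA : eLpNorm f 2 volume = ENNReal.ofReal SA := by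
    rw [hf2.eLpNorm_eq_integral_rpow_norm two_ne_zero ENNReal.ofNat_ne_top]
    congr 1
    rw [hSA_def]
    norm_num
  have eqB : eLpNorm (deriv f) 2 volume = ENNReal.ofReal SB := by
    rw [hf'2.eLpNorm_eq_integral_rpow_norm two_ne_zero ENNReal.ofNat_ne_top]
    congr 1
    rw [hSB_def]
    norm_num
  -- express eLpNorm powers as lintegrals
  have h4 : eLpNorm f 4 volume ^ (4:ℕ) = ∫⁻ x, (‖f x‖₊ : ℝ≥0∞) ^ (4:ℝ) := by
    rw [eLpNorm_eq_lintegral_rpow_enorm_toReal (by norm_num) (by norm_num),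
      ← ENNReal.rpow_natCast _ 4, ← ENNReal.rpow_mul]
    norm_num
    rfl
  have h2 : eLpNorm f 2 volume ^ (2:ℕ) = ∫⁻ x, (‖f x‖₊ : ℝ≥0∞) ^ (2:ℝ) := by
    rw [eLpNorm_eq_lintegral_rpow_enorm_toReal (by norm_num) (by norm_num),
      ← ENNReal.rpow_natCast _ 2, ← ENNReal.rpow_mul]
    norm_num
    rfl
  -- main lintegral estimate
  have key : eLpNorm f 4 volume ^ (4:ℕ) ≤
      ENNReal.ofReal (2*K) * eLpNorm f 2 volume ^ (2:ℕ) := by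
    rw [h4, h2, ← lintegral_const_mul' _ _ ENNReal.ofReal_ne_top]
    refine lintegral_mono fun x => ?_
    have e1 : ((‖f x‖₊ : ℝ≥0∞)) ^ (4:ℝ) = ENNReal.ofReal (‖f x‖ ^ (4:ℝ)) := by
      rw [← enorm_eq_nnnorm, ← ofReal_norm,
        ENNReal.ofReal_rpow_of_nonneg (norm_nonneg _) (by norm_num)]
    have e2 : ((‖f x‖₊ : ℝ≥0∞)) ^ (2:ℝ) = ENNReal.ofReal (‖f x‖ ^ (2:ℝ)) := by
      rw [← enorm_eq_nnnorm, ← ofReal_norm,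
        ENNReal.ofReal_rpow_of_nonneg (norm_nonneg _) (by norm_num)]
    rw [e1, e2, ← ENNReal.ofReal_mul (by positivity)]
    refine ENNReal.ofReal_le_ofReal ?_
    have : ‖f x‖ ^ (4:ℝ) = (‖f x‖^2) * (‖f x‖^2) := by
      rw [← pow_add, ← Real.rpow_natCast ‖f x‖ 4]
      norm_num
    rw [this, (by rw [← Real.rpow_natCast ‖f x‖ 2]; norm_num : ‖f x‖ ^ (2:ℝ) = ‖f x‖^2)]
    exact mul_le_mul_of_nonneg_right (hpt x) (by positivity)
  -- finish
  have hofK : ENNReal.ofReal (2*K) ≤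
      ENNReal.ofReal 2 * eLpNorm f 2 volume * eLpNorm (deriv f) 2 volume := by
    rw [eqA, eqB, ← ENNReal.ofReal_mul (by norm_num), ← ENNReal.ofReal_mul (by positivity)]
    refine ENNReal.ofReal_le_ofReal ?_
    rw [mul_assoc]
    exact mul_le_mul_of_nonneg_left hCS (by norm_num)
  calc eLpNorm f 4 volume ^ (4:ℕ)
      ≤ ENNReal.ofReal (2*K) * eLpNorm f 2 volume ^ (2:ℕ) := key
    _ ≤ (ENNReal.ofReal 2 * eLpNorm f 2 volume * eLpNorm (deriv f) 2 volume) *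
        eLpNorm f 2 volume ^ (2:ℕ) := mul_le_mul_left hofK _
    _ = ENNReal.ofReal 2 * eLpNorm f 2 volume ^ (3:ℕ) * eLpNorm (deriv f) 2 volume := by
        ring
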